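/- (Lemma 3.1) Let X_T be Hermitian with R_{X_T} invertible and ρ(T̂_{X_T}) < 1, where T̂ := T̄T. Suppose X is Hermitian with R_X positive definite, and Y is a positive semidefinite Hermitian matrix satisfying C_{T_X}(Y) ≥ K(X_T, X) in the Loewner order. Then ρ(T̂_X) < 1. -/

import Mathlib

open Matrix Filter Topology
open scoped ComplexOrder

noncomputable section

namespace CDARE

variable {n m : ℕ}

/-- Entrywise complex conjugate of a matrix. -/
def mconj {p q : ℕ} (M : Matrix (Fin p) (Fin q) ℂ) : Matrix (Fin p) (Fin q) ℂ :=
  M.map (starRingEnd ℂ)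

/-- `hatM M = conj M * M`. -/
def hatM (M : Matrix (Fin n) (Fin n) ℂ) : Matrix (Fin n) (Fin n) ℂ := mconj M * M

/-- `R_X = R + Bᴴ X̄ B`. -/
def RX (R : Matrix (Fin m) (Fin m) ℂ) (B : Matrix (Fin n) (Fin m) ℂ)
    (X : Matrix (Fin n) (Fin n) ℂ) : Matrix (Fin m) (Fin m) ℂ :=
  R + Bᴴ * mconj X * B

/-- `F_X = R_X⁻¹ Bᴴ X̄ A`. -/
def FX (A : Matrix (Fin n) (Fin n) ℂ) (B : Matrix (Fin n) (Fin m) ℂ)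
    (R : Matrix (Fin m) (Fin m) ℂ) (X : Matrix (Fin n) (Fin n) ℂ) :
    Matrix (Fin m) (Fin n) ℂ :=
  (RX R B X)⁻¹ * (Bᴴ * mconj X * A)

/-- `T_X = A - B F_X`. -/
def TX (A : Matrix (Fin n) (Fin n) ℂ) (B : Matrix (Fin n) (Fin m) ℂ)
    (R : Matrix (Fin m) (Fin m) ℂ) (X : Matrix (Fin n) (Fin n) ℂ) :
    Matrix (Fin n) (Fin n) ℂ :=
  A - B * FX A B R X

/-- The Riccati operator `R(X)`. -/
def Rop (A : Matrix (Fin n) (Fin n) ℂ) (B : Matrix (Fin n) (Fin m) ℂ)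
    (R : Matrix (Fin m) (Fin m) ℂ) (H : Matrix (Fin n) (Fin n) ℂ)
    (X : Matrix (Fin n) (Fin n) ℂ) : Matrix (Fin n) (Fin n) ℂ :=
  Aᴴ * mconj X * A - Aᴴ * mconj X * B * (RX R B X)⁻¹ * (Bᴴ * mconj X * A) + H

/-- `H_X = H + F_Xᴴ R F_X`. -/
def HX (A : Matrix (Fin n) (Fin n) ℂ) (B : Matrix (Fin n) (Fin m) ℂ)
    (R : Matrix (Fin m) (Fin m) ℂ) (H : Matrix (Fin n) (Fin n) ℂ)
    (X : Matrix (Fin n) (Fin n) ℂ) : Matrix (Fin n) (Fin n) ℂ :=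
  H + (FX A B R X)ᴴ * R * FX A B R X

/-- `K(Y, X) = (F_Y - F_X)ᴴ R_X (F_Y - F_X)`. -/
def Kop (A : Matrix (Fin n) (Fin n) ℂ) (B : Matrix (Fin n) (Fin m) ℂ)
    (R : Matrix (Fin m) (Fin m) ℂ) (Y X : Matrix (Fin n) (Fin n) ℂ) :
    Matrix (Fin n) (Fin n) ℂ :=
  (FX A B R Y - FX A B R X)ᴴ * RX R B X * (FX A B R Y - FX A B R X)

/-- Conjugate Stein operator `C_C(X) = X - Cᴴ X̄ C`. -/
def CStein (C X : Matrix (Fin n) (Fin n) ℂ) : Matrix (Fin n) (Fin n) ℂ :=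
  X - Cᴴ * mconj X * C

/-- The set `S_≥`. -/
def Sge (A : Matrix (Fin n) (Fin n) ℂ) (B : Matrix (Fin n) (Fin m) ℂ)
    (R : Matrix (Fin m) (Fin m) ℂ) (H : Matrix (Fin n) (Fin n) ℂ) :
    Set (Matrix (Fin n) (Fin n) ℂ) :=
  {X | X.IsHermitian ∧ ∃ XT : Matrix (Fin n) (Fin n) ℂ, XT.IsHermitian ∧
      IsUnit (RX R B XT) ∧ spectralRadius ℂ (hatM (TX A B R XT)) < 1 ∧
      (CStein (TX A B R XT) X - HX A B R H XT).PosSemidef}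


/-- `mconj` applied via `mulVec` is conjugation of the `mulVec` by the conjugate vector. -/
lemma mconj_mulVec (M : Matrix (Fin n) (Fin n) ℂ) (v : Fin n → ℂ) :
    mconj M *ᵥ v = star (M *ᵥ star v) := by
  funext i
  simp [mconj, Matrix.mulVec, dotProduct, map_sum]

lemma quad_eq {p q : ℕ} (A : Matrix (Fin p) (Fin q) ℂ) (N : Matrix (Fin p) (Fin p) ℂ)
    (v : Fin q → ℂ) :
    star v ⬝ᵥ ((Aᴴ * N * A) *ᵥ v) = star (A *ᵥ v) ⬝ᵥ (N *ᵥ (A *ᵥ v)) := by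
  rw [← Matrix.mulVec_mulVec, ← Matrix.mulVec_mulVec, Matrix.dotProduct_mulVec,
    ← Matrix.star_mulVec]

lemma mem_spectrum_iff_exists {M : Matrix (Fin n) (Fin n) ℂ} {μ : ℂ} :
    μ ∈ spectrum ℂ M ↔ ∃ v, v ≠ 0 ∧ M *ᵥ v = μ • v := by
  rw [← AlgEquiv.spectrum_eq (Matrix.toLinAlgEquiv' : Matrix (Fin n) (Fin n) ℂ ≃ₐ[ℂ] _) M,
    ← Module.End.hasEigenvalue_iff_mem_spectrum]
  constructor
  · intro h
    obtain ⟨v, hv⟩ := h.exists_hasEigenvector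
    exact ⟨v, hv.2, by simpa [Matrix.toLinAlgEquiv'_apply] using hv.apply_eq_smul⟩
  · rintro ⟨v, hv0, hv⟩
    exact Module.End.hasEigenvalue_of_hasEigenvector
      ⟨Module.End.mem_eigenspace_iff.mpr (by simpa [Matrix.toLinAlgEquiv'_apply] using hv), hv0⟩

/-- Lemma 3.1: stability of the closed-loop matrix. -/
theorem lemma_3_1 (n m : ℕ) (A : Matrix (Fin n) (Fin n) ℂ) (B : Matrix (Fin n) (Fin m) ℂ)
    (R : Matrix (Fin m) (Fin m) ℂ) (H : Matrix (Fin n) (Fin n) ℂ)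
    (hR : R.IsHermitian) (hRunit : IsUnit R) (hH : H.IsHermitian)
    (XT : Matrix (Fin n) (Fin n) ℂ) (hXT : XT.IsHermitian)
    (hRXT : IsUnit (RX R B XT))
    (hρT : spectralRadius ℂ (hatM (TX A B R XT)) < 1)
    (X : Matrix (Fin n) (Fin n) ℂ) (hX : X.IsHermitian)
    (hRXpd : (RX R B X).PosDef)
    (Y : Matrix (Fin n) (Fin n) ℂ) (hY : Y.PosSemidef)
    (hineq : (CStein (TX A B R X) Y - Kop A B R XT X).PosSemidef) :
    spectralRadius ℂ (hatM (TX A B R X)) < 1 := by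
  classical
  set T := TX A B R X with hTdef
  set TT := TX A B R XT with hTTdef
  set D := FX A B R XT - FX A B R X with hDdef
  set RXX := RX R B X with hRXXdef
  -- the key quadratic inequality
  have key : ∀ v : Fin n → ℂ,
      star (T *ᵥ v) ⬝ᵥ (mconj Y *ᵥ (T *ᵥ v)) + star (D *ᵥ v) ⬝ᵥ (RXX *ᵥ (D *ᵥ v))
        ≤ star v ⬝ᵥ (Y *ᵥ v) := by
    intro v
    have h := hineq.dotProduct_mulVec_nonneg v
    have e : CStein T Y - Kop A B R XT X = Y - (Tᴴ * mconj Y * T + Dᴴ * RXX * D) := by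
      simp only [CStein, Kop, hDdef, hRXXdef, sub_sub]
    rw [e, Matrix.sub_mulVec, dotProduct_sub, Matrix.add_mulVec,
      dotProduct_add, quad_eq, quad_eq] at h
    exact sub_nonneg.mp h
  -- self-adjoint trick for mconj Y
  have hsa : ∀ z : Fin n → ℂ,
      star z ⬝ᵥ (mconj Y *ᵥ z) = star (star z) ⬝ᵥ (Y *ᵥ star z) := by
    intro z
    rw [mconj_mulVec, Matrix.star_dotProduct_star, dotProduct_comm, star_star]
    have h0 : 0 ≤ z ⬝ᵥ (Y *ᵥ star z) := by
      have := hY.dotProduct_mulVec_nonneg (star z); rwa [star_star] at this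
    exact (IsSelfAdjoint.of_nonneg h0).star_eq
  -- every spectral value of hatM T has norm < 1
  have hspec : ∀ μ ∈ spectrum ℂ (hatM T), (‖μ‖₊ : ENNReal) < 1 := by
    intro μ hμ
    by_contra hge
    rw [not_lt] at hge
    have h1 : (1 : ℝ) ≤ ‖μ‖ := by
      have := ENNReal.one_le_coe_iff.mp hge
      exact_mod_cast this
    obtain ⟨u, hu0, huv⟩ := mem_spectrum_iff_exists.mp hμ
    set w := T *ᵥ u with hw
    have hmcw : mconj T *ᵥ w = μ • u := by
      rw [hw, Matrix.mulVec_mulVec]; exact huv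
    have hTw : T *ᵥ star w = (starRingEnd ℂ) μ • star u := by
      have h2 := congrArg star hmcw
      rw [mconj_mulVec, star_star, star_smul] at h2
      exact h2
    have h1u := key u
    have h2w := key (star w)
    rw [← hw, hsa w] at h1u
    rw [hTw, hsa] at h2w
    -- rewrite the smul-quadratic term
    have e2 : star (star ((starRingEnd ℂ) μ • star u)) ⬝ᵥ
          (Y *ᵥ star ((starRingEnd ℂ) μ • star u))
        = (μ * (starRingEnd ℂ) μ) * (star u ⬝ᵥ (Y *ᵥ u)) := by
      simp only [star_smul, star_star, RingHomCompTriple.comp_apply, RingHom.id_apply,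
        Complex.star_def, Complex.conj_conj, Matrix.mulVec_smul, smul_dotProduct,
        dotProduct_smul, smul_eq_mul]
      ring
    rw [e2] at h2w
    set a := star u ⬝ᵥ (Y *ᵥ u) with ha'
    set b := star (star w) ⬝ᵥ (Y *ᵥ star w) with hb'
    set c := star (D *ᵥ u) ⬝ᵥ (RXX *ᵥ (D *ᵥ u)) with hc'
    set d := star (D *ᵥ star w) ⬝ᵥ (RXX *ᵥ (D *ᵥ star w)) with hd'
    have ha0 : 0 ≤ a := hY.dotProduct_mulVec_nonneg u
    have hc0 : 0 ≤ c := hRXpd.posSemidef.dotProduct_mulVec_nonneg _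
    have hd0 : 0 ≤ d := hRXpd.posSemidef.dotProduct_mulVec_nonneg _
    have hs1 : (1 : ℂ) ≤ μ * (starRingEnd ℂ) μ := by
      rw [Complex.mul_conj]
      rw [show (1 : ℂ) = ((1 : ℝ) : ℂ) by norm_num, Complex.real_le_real]
      rw [Complex.normSq_eq_norm_sq]
      nlinarith [h1]
    have haa : a ≤ (μ * (starRingEnd ℂ) μ) * a := by
      calc a = 1 * a := (one_mul a).symm
        _ ≤ (μ * (starRingEnd ℂ) μ) * a := mul_le_mul_of_nonneg_right hs1 ha0
    have hchain : a + d + c ≤ a :=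
      le_trans (add_le_add_left (add_le_add_left haa d) c)
        (le_trans (add_le_add_left h2w c) h1u)
    have h0 : d + c ≤ 0 := by
      rw [add_assoc] at hchain
      exact (add_le_iff_nonpos_right a).mp hchain
    have hc : c = 0 :=
      le_antisymm (le_trans (le_add_of_nonneg_left hd0) h0) hc0
    have hd : d = 0 :=
      le_antisymm (le_trans (le_add_of_nonneg_right hc0) h0) hd0
    have hDu : D *ᵥ u = 0 := by
      by_contra hne
      exact (hRXpd.dotProduct_mulVec_pos hne).ne' hc
    have hDw : D *ᵥ star w = 0 := by
      by_contra hne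
      exact (hRXpd.dotProduct_mulVec_pos hne).ne' hd
    have hTTsub : TT = T - B * D := by
      rw [hTTdef, hTdef, hDdef]
      simp only [TX, Matrix.mul_sub]
      abel
    have hTTu : TT *ᵥ u = w := by
      rw [hTTsub, Matrix.sub_mulVec, ← Matrix.mulVec_mulVec, hDu, Matrix.mulVec_zero,
        sub_zero, ← hw]
    have hTTw : TT *ᵥ star w = (starRingEnd ℂ) μ • star u := by
      rw [hTTsub, Matrix.sub_mulVec, ← Matrix.mulVec_mulVec, hDw, Matrix.mulVec_zero,
        sub_zero, hTw]
    have hfinal : hatM TT *ᵥ u = μ • u := by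
      show (mconj TT * TT) *ᵥ u = μ • u
      rw [← Matrix.mulVec_mulVec, hTTu, mconj_mulVec, hTTw, star_smul, star_star]
      simp
    have hmem : μ ∈ spectrum ℂ (hatM TT) := mem_spectrum_iff_exists.mpr ⟨u, hu0, hfinal⟩
    have hle2 : (‖μ‖₊ : ENNReal) ≤ spectralRadius ℂ (hatM TT) :=
      le_iSup₂ (f := fun k (_ : k ∈ spectrum ℂ (hatM TT)) => (‖k‖₊ : ENNReal)) μ hmem
    exact absurd (lt_of_le_of_lt hle2 hρT) (not_lt.mpr hge)
  -- conclude using finiteness of the spectrum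
  have hfin : (spectrum ℂ (hatM T)).Finite := Matrix.finite_spectrum _
  have hle : spectralRadius ℂ (hatM T)
      ≤ hfin.toFinset.sup (fun k => (‖k‖₊ : ENNReal)) := by
    refine iSup₂_le fun k hk => ?_
    exact Finset.le_sup (f := fun k => (‖k‖₊ : ENNReal)) (hfin.mem_toFinset.mpr hk)
  refine lt_of_le_of_lt hle ?_
  rw [Finset.sup_lt_iff (by norm_num : (⊥ : ENNReal) < 1)]
  intro k hk
  exact hspec k (hfin.mem_toFinset.mp hk)

end CDARE
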